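/- arXiv:2512.00951 — 3 statements merged into one kernel-verified Lean document; each statement's English description precedes it below -/
import Mathlib

section
/- Let A be a 2×2 real symmetric matrix with λ|ξ|² ≤ ξᵀAξ ≤ Λ|ξ|² for all ξ ∈ ℝ², 0 < λ ≤ Λ. Set ã = a₁₁/a₂₂, b̃ = 2a₁₂/a₂₂, and let Ãˢ = (ã, b̃/2; b̃/2, 1) be the symmetric part of Ã. Then with θ = λ³/(Λ²(Λ+λ)) and Θ = Λ²(Λ+λ)/λ³ one has θ·I₂ ≤ Ãˢ ≤ Θ·I₂ in the sense of quadratic forms. -/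
/-- With `ã = a₁₁/a₂₂`, `b̃ = 2a₁₂/a₂₂` and `Ãˢ = (ã, b̃/2; b̃/2, 1)` the symmetric part of
`Ã`, one has `θ·I₂ ≤ Ãˢ ≤ Θ·I₂` in the sense of quadratic forms, where
`θ = λ³/(Λ²(Λ+λ))` and `Θ = Λ²(Λ+λ)/λ³`. -/
theorem symmetric_part_ellipticity (lam Lam a11 a12 a22 : ℝ)
    (hlam : 0 < lam) (hlL : lam ≤ Lam)
    (hell : ∀ ξ : ℝ × ℝ,
      lam * (ξ.1 ^ 2 + ξ.2 ^ 2) ≤ a11 * ξ.1 ^ 2 + 2 * a12 * ξ.1 * ξ.2 + a22 * ξ.2 ^ 2 ∧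
      a11 * ξ.1 ^ 2 + 2 * a12 * ξ.1 * ξ.2 + a22 * ξ.2 ^ 2 ≤ Lam * (ξ.1 ^ 2 + ξ.2 ^ 2)) :
    ∀ ξ : ℝ × ℝ,
      lam ^ 3 / (Lam ^ 2 * (Lam + lam)) * (ξ.1 ^ 2 + ξ.2 ^ 2) ≤
        a11 / a22 * ξ.1 ^ 2 + 2 * a12 / a22 * ξ.1 * ξ.2 + ξ.2 ^ 2 ∧
      a11 / a22 * ξ.1 ^ 2 + 2 * a12 / a22 * ξ.1 * ξ.2 + ξ.2 ^ 2 ≤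
        Lam ^ 2 * (Lam + lam) / lam ^ 3 * (ξ.1 ^ 2 + ξ.2 ^ 2) := by
  intro ξ
  obtain ⟨h01l, h01u⟩ := hell (0, 1)
  simp only [Prod.fst, Prod.snd] at h01l h01u
  have ha22l : lam ≤ a22 := by nlinarith
  have ha22u : a22 ≤ Lam := by nlinarith
  have ha22 : 0 < a22 := lt_of_lt_of_le hlam ha22l
  have hLam : 0 < Lam := lt_of_lt_of_le hlam hlL
  obtain ⟨hl, hu⟩ := hell ξ
  have key : a11 / a22 * ξ.1 ^ 2 + 2 * a12 / a22 * ξ.1 * ξ.2 + ξ.2 ^ 2 =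
      (a11 * ξ.1 ^ 2 + 2 * a12 * ξ.1 * ξ.2 + a22 * ξ.2 ^ 2) / a22 := by
    field_simp
  have hsq : 0 ≤ ξ.1 ^ 2 + ξ.2 ^ 2 := by positivity
  have hth : lam ^ 3 / (Lam ^ 2 * (Lam + lam)) * a22 ≤ lam := by
    rw [div_mul_eq_mul_div, div_le_iff₀ (by positivity)]
    have h2 : lam ^ 2 ≤ Lam * (Lam + lam) := by nlinarith
    nlinarith [mul_le_mul_of_nonneg_left h2 (mul_pos hlam hLam).le,
      mul_le_mul_of_nonneg_left ha22u (pow_pos hlam 3).le]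
  have hTh : Lam ≤ Lam ^ 2 * (Lam + lam) / lam ^ 3 * lam := by
    rw [div_mul_eq_mul_div, le_div_iff₀ (by positivity)]
    have h2 : lam ^ 2 ≤ Lam * (Lam + lam) := by nlinarith
    nlinarith [mul_le_mul_of_nonneg_left h2 (mul_pos hlam hLam).le]
  constructor
  · rw [key, le_div_iff₀ ha22]
    calc lam ^ 3 / (Lam ^ 2 * (Lam + lam)) * (ξ.1 ^ 2 + ξ.2 ^ 2) * a22
        = lam ^ 3 / (Lam ^ 2 * (Lam + lam)) * a22 * (ξ.1 ^ 2 + ξ.2 ^ 2) := by ring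
      _ ≤ lam * (ξ.1 ^ 2 + ξ.2 ^ 2) := mul_le_mul_of_nonneg_right hth hsq
      _ ≤ _ := hl
  · rw [key, div_le_iff₀ ha22]
    calc a11 * ξ.1 ^ 2 + 2 * a12 * ξ.1 * ξ.2 + a22 * ξ.2 ^ 2
        ≤ Lam * (ξ.1 ^ 2 + ξ.2 ^ 2) := hu
      _ ≤ Lam ^ 2 * (Lam + lam) / lam ^ 3 * lam * (ξ.1 ^ 2 + ξ.2 ^ 2) :=
          mul_le_mul_of_nonneg_right hTh hsq
      _ = Lam ^ 2 * (Lam + lam) / lam ^ 3 * (ξ.1 ^ 2 + ξ.2 ^ 2) * lam := by ring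
      _ ≤ Lam ^ 2 * (Lam + lam) / lam ^ 3 * (ξ.1 ^ 2 + ξ.2 ^ 2) * a22 :=
          mul_le_mul_of_nonneg_left ha22l (by positivity)
end

section
/- Let 0 < λ ≤ Λ, θ = λ³/(Λ²(Λ+λ)), and let A be a 2×2 real symmetric matrix with λ|ξ|² ≤ ξᵀAξ ≤ Λ|ξ|². Then the matrix B₁ = (a₁₁/a₂₂ − θ, a₁₂/a₂₂; a₁₂/a₂₂, 1 − θ) satisfies det(B₁) ≥ θ² and Tr(B₁) ≥ 0; in particular B₁ is positive semidefinite. -/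
set_option maxHeartbeats 1600000 in
/-- With `θ = λ³/(Λ²(Λ+λ))`, the matrix `B₁ = (a₁₁/a₂₂ − θ, a₁₂/a₂₂; a₁₂/a₂₂, 1 − θ)`
satisfies `det(B₁) ≥ θ²` and `Tr(B₁) ≥ 0`; in particular `B₁` is positive semidefinite. -/
theorem B1_psd (lam Lam a11 a12 a22 : ℝ)
    (hlam : 0 < lam) (hlL : lam ≤ Lam)
    (hell : ∀ ξ : ℝ × ℝ,
      lam * (ξ.1 ^ 2 + ξ.2 ^ 2) ≤ a11 * ξ.1 ^ 2 + 2 * a12 * ξ.1 * ξ.2 + a22 * ξ.2 ^ 2 ∧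
      a11 * ξ.1 ^ 2 + 2 * a12 * ξ.1 * ξ.2 + a22 * ξ.2 ^ 2 ≤ Lam * (ξ.1 ^ 2 + ξ.2 ^ 2)) :
    (a11 / a22 - lam ^ 3 / (Lam ^ 2 * (Lam + lam))) * (1 - lam ^ 3 / (Lam ^ 2 * (Lam + lam)))
        - (a12 / a22) ^ 2 ≥ (lam ^ 3 / (Lam ^ 2 * (Lam + lam))) ^ 2 ∧
    (a11 / a22 - lam ^ 3 / (Lam ^ 2 * (Lam + lam))) + (1 - lam ^ 3 / (Lam ^ 2 * (Lam + lam))) ≥ 0 ∧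
    ∀ ξ : ℝ × ℝ, 0 ≤ (a11 / a22 - lam ^ 3 / (Lam ^ 2 * (Lam + lam))) * ξ.1 ^ 2
        + 2 * (a12 / a22) * ξ.1 * ξ.2
        + (1 - lam ^ 3 / (Lam ^ 2 * (Lam + lam))) * ξ.2 ^ 2 := by
  have hLam : (0:ℝ) < Lam := lt_of_lt_of_le hlam hlL
  have h10 := hell (1, 0)
  have h01 := hell (0, 1)
  norm_num at h10 h01
  have ha11l : lam ≤ a11 := by nlinarith [h10.1]
  have ha11L : a11 ≤ Lam := by nlinarith [h10.2]
  have ha22l : lam ≤ a22 := by nlinarith [h01.1]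
  have ha22L : a22 ≤ Lam := by nlinarith [h01.2]
  have ha22 : (0:ℝ) < a22 := lt_of_lt_of_le hlam ha22l
  -- discriminant: a12^2 ≤ (a11-lam)(a22-lam)
  have hquad : ∀ t : ℝ, 0 ≤ (a11 - lam) * t ^ 2 + (2 * a12) * t + (a22 - lam) := by
    intro t
    have h := (hell (t, 1)).1
    norm_num at h
    nlinarith [h]
  have hdisc : discrim (a11 - lam) (2 * a12) (a22 - lam) ≤ 0 := by
    apply discrim_le_zero
    intro x; have := hquad x; nlinarith
  rw [discrim] at hdisc
  have hdet : lam ^ 2 ≤ a11 * a22 - a12 ^ 2 := by nlinarith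
  -- θ facts
  have hD : (0:ℝ) < Lam ^ 2 * (Lam + lam) := by positivity
  obtain ⟨θ, hθdef⟩ : ∃ θ : ℝ, θ = lam ^ 3 / (Lam ^ 2 * (Lam + lam)) := ⟨_, rfl⟩
  rw [← hθdef]
  have hθpos : 0 < θ := by rw [hθdef]; positivity
  have hθhalf : θ ≤ 1 / 2 := by
    rw [hθdef, div_le_iff₀ hD]
    nlinarith [mul_nonneg (sub_nonneg.2 hlL) (by positivity : (0:ℝ) ≤ Lam ^ 2 + 2 * Lam * lam + 2 * lam ^ 2)]
  have hθlL : θ ≤ lam / Lam := by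
    rw [hθdef, div_le_div_iff₀ hD hLam]
    nlinarith [mul_nonneg (mul_nonneg hlam.le hLam.le) (sub_nonneg.2 hlL),
      mul_pos (mul_pos hlam hLam) hLam, sq_nonneg (lam * Lam)]
  have key : θ * (a11 * a22 + a22 ^ 2) ≤ lam ^ 2 := by
    have h1 : θ * (a11 * a22 + a22 ^ 2) ≤ θ * (2 * Lam ^ 2) := by
      apply mul_le_mul_of_nonneg_left _ hθpos.le
      nlinarith
    have h2 : θ * (2 * Lam ^ 2) ≤ lam ^ 2 := by
      rw [hθdef, div_mul_eq_mul_div, div_le_iff₀ hD]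
      nlinarith [mul_nonneg (mul_nonneg (sq_nonneg lam) (sq_nonneg Lam)) (sub_nonneg.2 hlL)]
    linarith
  have hgoal1 : (a11 / a22 - θ) * (1 - θ) - (a12 / a22) ^ 2 ≥ θ ^ 2 := by
    rw [ge_iff_le, ← sub_nonneg]
    have heq : (a11 / a22 - θ) * (1 - θ) - (a12 / a22) ^ 2 - θ ^ 2
        = (a11 * a22 - a12 ^ 2 - θ * (a11 * a22 + a22 ^ 2)) / a22 ^ 2 := by
      field_simp
      ring
    rw [heq]
    apply div_nonneg _ (by positivity)
    linarith [hdet, key]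
  have h11 : a11 / a22 - θ ≥ 0 := by
    have : θ ≤ a11 / a22 := by
      calc θ ≤ lam / Lam := hθlL
        _ ≤ a11 / a22 := by
          exact div_le_div₀ (by linarith) ha11l ha22 ha22L
    linarith
  refine ⟨hgoal1, by linarith, ?_⟩
  rintro ⟨x, y⟩
  have h22 : (0:ℝ) < 1 - θ := by linarith
  have hdn : (0:ℝ) ≤ (a11 / a22 - θ) * (1 - θ) - (a12 / a22) ^ 2 := by linarith [hgoal1, sq_nonneg θ]
  have hid : (1 - θ) * ((a11 / a22 - θ) * x ^ 2 + 2 * (a12 / a22) * x * y + (1 - θ) * y ^ 2)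
      = ((1 - θ) * y + (a12 / a22) * x) ^ 2
        + ((a11 / a22 - θ) * (1 - θ) - (a12 / a22) ^ 2) * x ^ 2 := by ring
  nlinarith [hid, sq_nonneg ((1 - θ) * y + (a12 / a22) * x), mul_nonneg hdn (sq_nonneg x), h22]
end

section
/- Let 0 < λ ≤ Λ and Θ = Λ²(Λ+λ)/λ³, and let A be a 2×2 real symmetric matrix with λ|ξ|² ≤ ξᵀAξ ≤ Λ|ξ|². Then the matrix B₂ = (a₁₁/a₂₂ − Θ, a₁₂/a₂₂; a₁₂/a₂₂, 1 − Θ) satisfies det(B₂) ≥ 0 and Tr(B₂) ≤ 0; in particular B₂ is negative semidefinite. -/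
set_option maxHeartbeats 1000000


/-- With `Θ = Λ²(Λ+λ)/λ³`, the matrix `B₂ = (a₁₁/a₂₂ − Θ, a₁₂/a₂₂; a₁₂/a₂₂, 1 − Θ)`
satisfies `det(B₂) ≥ 0` and `Tr(B₂) ≤ 0`; in particular `B₂` is negative semidefinite. -/
theorem B2_nsd (lam Lam a11 a12 a22 : ℝ)
    (hlam : 0 < lam) (hlL : lam ≤ Lam)
    (hell : ∀ ξ : ℝ × ℝ,
      lam * (ξ.1 ^ 2 + ξ.2 ^ 2) ≤ a11 * ξ.1 ^ 2 + 2 * a12 * ξ.1 * ξ.2 + a22 * ξ.2 ^ 2 ∧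
      a11 * ξ.1 ^ 2 + 2 * a12 * ξ.1 * ξ.2 + a22 * ξ.2 ^ 2 ≤ Lam * (ξ.1 ^ 2 + ξ.2 ^ 2)) :
    (a11 / a22 - Lam ^ 2 * (Lam + lam) / lam ^ 3) * (1 - Lam ^ 2 * (Lam + lam) / lam ^ 3)
        - (a12 / a22) ^ 2 ≥ 0 ∧
    (a11 / a22 - Lam ^ 2 * (Lam + lam) / lam ^ 3) + (1 - Lam ^ 2 * (Lam + lam) / lam ^ 3) ≤ 0 ∧
    ∀ ξ : ℝ × ℝ, (a11 / a22 - Lam ^ 2 * (Lam + lam) / lam ^ 3) * ξ.1 ^ 2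
        + 2 * (a12 / a22) * ξ.1 * ξ.2
        + (1 - Lam ^ 2 * (Lam + lam) / lam ^ 3) * ξ.2 ^ 2 ≤ 0 := by
  have h10 := hell (1, 0)
  have h01 := hell (0, 1)
  simp only [Prod.fst, Prod.snd] at h10 h01
  have h11l : lam ≤ a11 := by nlinarith [h10.1]
  have h11u : a11 ≤ Lam := by nlinarith [h10.2]
  have h22l : lam ≤ a22 := by nlinarith [h01.1]
  have h22u : a22 ≤ Lam := by nlinarith [h01.2]
  have ha22 : 0 < a22 := lt_of_lt_of_le hlam h22l
  have hdet : a12 ^ 2 ≤ a11 * a22 := by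
    have h := (hell (a22, -a12)).1
    simp only [Prod.fst, Prod.snd] at h
    nlinarith [sq_nonneg a12, sq_nonneg a22]
  -- abbreviations
  set p : ℝ := a11 / a22 with hp
  set q : ℝ := a12 / a22 with hq
  set r : ℝ := Lam / lam with hrdef
  have hr1 : (1:ℝ) ≤ r := (one_le_div hlam).mpr hlL
  have hT : Lam ^ 2 * (Lam + lam) / lam ^ 3 = r ^ 3 + r ^ 2 := by
    rw [hrdef]
    field_simp
  have hp_le : p ≤ r := div_le_div₀ (by linarith) h11u hlam h22l
  have hp_pos : 0 < p := div_pos (by linarith) ha22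
  have e1 : q * a22 = a12 := div_mul_cancel₀ _ (ne_of_gt ha22)
  have e2 : p * a22 = a11 := div_mul_cancel₀ _ (ne_of_gt ha22)
  have e1' : q ^ 2 * a22 ^ 2 = a12 ^ 2 := by rw [← e1]; ring
  have e2' : p * a22 ^ 2 = a11 * a22 := by rw [← e2]; ring
  have hq2 : q ^ 2 ≤ p := by nlinarith [hdet, mul_pos ha22 ha22, e1', e2']
  rw [hT]
  have hrr : 0 ≤ r := by linarith
  have haux1 : 0 ≤ r * (r - 1) := mul_nonneg hrr (by linarith)
  have haux2 : 0 ≤ r * (r - 1) * (r + 1) := mul_nonneg haux1 (by linarith)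
  have h1 : r ≤ r ^ 3 + r ^ 2 - p := by nlinarith [hp_le]
  have h2 : (1:ℝ) ≤ r ^ 3 + r ^ 2 - 1 := by nlinarith
  have h3 : q ^ 2 ≤ r := hq2.trans hp_le
  have hmul := mul_le_mul h1 h2 zero_le_one (by linarith : (0:ℝ) ≤ r ^ 3 + r ^ 2 - p)
  have hdet2 : (p - (r ^ 3 + r ^ 2)) * (1 - (r ^ 3 + r ^ 2)) - q ^ 2 ≥ 0 := by
    have hre : (p - (r ^ 3 + r ^ 2)) * (1 - (r ^ 3 + r ^ 2))
        = (r ^ 3 + r ^ 2 - p) * (r ^ 3 + r ^ 2 - 1) := by ring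
    linarith [hmul, h3, hre.ge, hre.le]
  have hb11 : p - (r ^ 3 + r ^ 2) ≤ -1 := by nlinarith [h1, hr1]
  have hb22 : 1 - (r ^ 3 + r ^ 2) ≤ -1 := by linarith
  refine ⟨hdet2, by linarith, ?_⟩
  intro ξ
  nlinarith [sq_nonneg ((p - (r ^ 3 + r ^ 2)) * ξ.1 + q * ξ.2), hdet2, hb11, hb22,
    sq_nonneg ξ.1, sq_nonneg ξ.2,
    mul_nonneg (by linarith : (0:ℝ) ≤ -(1 - (r ^ 3 + r ^ 2))) (sq_nonneg ξ.2)]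
end
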